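/- For every integer n ≥ 3 and every integer k with |k| ≤ n^{2/3}, one has a_{k,n} > (πn)^{-1/2} · exp(−k²/n) · exp(−1/(7n) − n^{−7/3}/(3(1 − n^{−2/3})²) − n^{−1/3}), and in particular a_{k,n} > (πn)^{-1/2} · exp(−k²/n) · exp(−1.21·n^{−1/3}). -/

import Mathlib

open Real Finset Filter Topology Set

lemma log_ineq1 {x : ℝ} (hx : 0 ≤ x) : log (1+x) ≤ x - x^2/2 + x^3/3 := by
  have h : ∀ y : ℝ, 0 ≤ y → MonotoneOn (fun s => s - s^2/2 + s^3/3 - log (1+s)) (Icc 0 y) := by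
    intro y hy
    have hd : ∀ t ∈ interior (Icc (0:ℝ) y), 0 ≤ deriv (fun s => s - s^2/2 + s^3/3 - log (1+s)) t := by
      intro t ht
      rw [interior_Icc] at ht
      have ht0 : (0:ℝ) < t := ht.1
      have h1t : (1:ℝ) + t ≠ 0 := by linarith
      have hD : HasDerivAt (fun s : ℝ => s - s^2/2 + s^3/3 - log (1+s))
          (1 - t + t^2 - 1/(1+t)) t := by
        have h1 : HasDerivAt (fun s : ℝ => log (1+s)) (1/(1+t)) t := by
          have := (Real.hasDerivAt_log h1t).comp t ((hasDerivAt_id t).const_add 1)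
          simpa [Function.comp_def] using this
        have h2 : HasDerivAt (fun s : ℝ => s - s^2/2 + s^3/3) (1 - t + t^2) t := by
          have : HasDerivAt (fun s : ℝ => s - s^2/2 + s^3/3)
              (1 - (2*t^1)/2 + (3*t^2)/3) t := by
            exact ((hasDerivAt_id t).sub (((hasDerivAt_pow 2 t)).div_const 2)).add
              ((hasDerivAt_pow 3 t).div_const 3)
          convert this using 1; ring
        exact h2.sub h1
      rw [hD.deriv]
      have : 1 - t + t^2 - 1/(1+t) = t^3/(1+t) := by field_simp; ring
      rw [this]
      positivity
    apply monotoneOn_of_deriv_nonneg (convex_Icc 0 y)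
    · apply ContinuousOn.sub (by fun_prop)
      apply ContinuousOn.log (by fun_prop)
      intro t ht; have := ht.1; dsimp; linarith
    · intro t ht
      rw [interior_Icc] at ht
      apply DifferentiableAt.differentiableWithinAt
      apply DifferentiableAt.sub (by fun_prop)
      apply DifferentiableAt.log (by fun_prop)
      have := ht.1; linarith
    · exact hd
  have := h x hx ⟨le_refl 0, hx⟩ ⟨hx, le_refl x⟩ hx
  simp at this
  linarith [this]

lemma log_ineq2 {y : ℝ} (h0 : 0 ≤ y) (h1 : y < 1) :
    -log (1-y) ≤ y + y^2/2 + y^3/(3*(1-y)) := by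
  have h : MonotoneOn (fun s => s + s^2/2 + s^3/(3*(1-s)) + log (1-s)) (Icc 0 y) := by
    have hd : ∀ t ∈ interior (Icc (0:ℝ) y), 0 ≤ deriv (fun s => s + s^2/2 + s^3/(3*(1-s)) + log (1-s)) t := by
      intro t ht
      rw [interior_Icc] at ht
      have ht0 : (0:ℝ) < t := ht.1
      have hty : t < y := ht.2
      have h1t : (1:ℝ) - t ≠ 0 := by intro h; nlinarith
      have h1t' : (0:ℝ) < 1 - t := by nlinarith
      have hD : HasDerivAt (fun s : ℝ => s + s^2/2 + s^3/(3*(1-s)) + log (1-s))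
          (1 + t + ((3*t^2)*(3*(1-t)) - t^3*(3*(0-1)))/(3*(1-t))^2 + (0-1)/(1-t)) t := by
        have h1 : HasDerivAt (fun s : ℝ => log (1-s)) ((0-1)/(1-t)) t := by
          have := (Real.hasDerivAt_log h1t).comp t ((hasDerivAt_id t).const_sub 1)
          simpa [div_eq_mul_inv, Function.comp_def] using this
        have h2 : HasDerivAt (fun s : ℝ => s^3/(3*(1-s)))
            (((3*t^2)*(3*(1-t)) - t^3*(3*(0-1)))/(3*(1-t))^2) t := by
          apply HasDerivAt.div
          · simpa using hasDerivAt_pow 3 t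
          · have := ((hasDerivAt_id t).const_sub 1).const_mul (3:ℝ)
            convert this using 1 <;> norm_num
          · intro h; apply h1t; nlinarith [h]
        exact ((hasDerivAt_id t).add ((hasDerivAt_pow 2 t).div_const 2)).add h2 |>.add h1 |> fun h => by
          exact h.congr_deriv (by norm_num)
      rw [hD.deriv]
      have key : 1 + t + ((3*t^2)*(3*(1-t)) - t^3*(3*(0-1)))/(3*(1-t))^2 + (0-1)/(1-t)
          = t^3/(3*(1-t)^2) := by field_simp; ring
      rw [key]; positivity
    apply monotoneOn_of_deriv_nonneg (convex_Icc 0 y)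
    · apply ContinuousOn.add
      apply ContinuousOn.add (by fun_prop)
      · apply ContinuousOn.div (by fun_prop) (by fun_prop)
        intro t ht; have := ht.2; dsimp; intro h; nlinarith
      · apply ContinuousOn.log (by fun_prop)
        intro t ht; have := ht.2; dsimp; intro h; nlinarith
    · intro t ht
      rw [interior_Icc] at ht
      have := ht.2
      apply DifferentiableAt.differentiableWithinAt
      apply DifferentiableAt.add
      apply DifferentiableAt.add (by fun_prop)
      · apply DifferentiableAt.div (by fun_prop) (by fun_prop)
        intro h; nlinarith
      · apply DifferentiableAt.log (by fun_prop)
        intro h; nlinarith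
    · exact hd
  have := h ⟨le_refl 0, h0⟩ ⟨h0, le_refl y⟩ h0
  simp at this
  linarith [this]

lemma sum_odd (K : ℕ) : ∑ j ∈ range K, (2*(j:ℝ)+1) = (K:ℝ)^2 := by
  induction K with
  | zero => simp
  | succ K ih => rw [sum_range_succ, ih]; push_cast; ring

lemma sum_cube (K : ℕ) : ∑ j ∈ range K, (((j:ℝ)+1)^3 + (j:ℝ)^3) = ((K:ℝ)^4 + (K:ℝ)^2)/2 := by
  induction K with
  | zero => simp
  | succ K ih => rw [sum_range_succ, ih]; push_cast; ring

lemma ratio_lb {x y u : ℝ} (hy0 : 0 ≤ y) (hyx : y ≤ x) (hyu : y < u) (hu1 : u < 1) :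
    Real.exp (-(x + y + (x^3 + y^3)/(3*(1-u)))) ≤ (1-y)/(1+x) := by
  have hx0 : 0 ≤ x := le_trans hy0 hyx
  have hy1 : y < 1 := by linarith
  have hx1 : (0:ℝ) < 1 + x := by linarith
  have hy1' : (0:ℝ) < 1 - y := by linarith
  have h1u : (0:ℝ) < 1 - u := by linarith
  have hlog : Real.log ((1+x)/(1-y)) ≤ x + y + (x^3 + y^3)/(3*(1-u)) := by
    rw [Real.log_div hx1.ne' hy1'.ne']
    have l1 := log_ineq1 hx0
    have l2 := log_ineq2 hy0 hy1
    have e1 : x^3/3 ≤ x^3/(3*(1-u)) :=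
      div_le_div_of_nonneg_left (by positivity) (by linarith) (by linarith)
    have e2 : y^3/(3*(1-y)) ≤ y^3/(3*(1-u)) :=
      div_le_div_of_nonneg_left (by positivity) (by linarith) (by linarith)
    have e3 : y^2 ≤ x^2 := by nlinarith
    have esplit : (x^3 + y^3)/(3*(1-u)) = x^3/(3*(1-u)) + y^3/(3*(1-u)) := by ring
    rw [esplit]
    linarith
  have hle : (1+x)/(1-y) ≤ Real.exp (x + y + (x^3 + y^3)/(3*(1-u))) := by
    have h := Real.exp_le_exp.mpr hlog
    rwa [Real.exp_log (by positivity)] at h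
  rw [Real.exp_neg, show (1-y)/(1+x) = ((1+x)/(1-y))⁻¹ by rw [inv_div]]
  exact inv_anti₀ (by positivity) hle

lemma term_lb {N u : ℝ} (j : ℕ) (hN3 : 3 ≤ N) (hu0 : 0 < u) (hu1 : u < 1)
    (hxu : (j:ℝ) + 1 ≤ N * u) :
    Real.exp (-((2*(j:ℝ)+1)/N + (((j:ℝ)+1)^3 + (j:ℝ)^3)/(N^3 * (3*(1-u)))))
      ≤ (N - j)/(N + j + 1) := by
  have hN0 : (0:ℝ) < N := by linarith
  have hj0 : (0:ℝ) ≤ (j:ℝ) := Nat.cast_nonneg j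
  have hyu : (j:ℝ)/N < u := by rw [div_lt_iff₀ hN0]; nlinarith
  have key := ratio_lb (x := ((j:ℝ)+1)/N) (y := (j:ℝ)/N)
    (by positivity) (by gcongr; linarith) hyu hu1
  have hNj : (0:ℝ) < N - j := by nlinarith
  have e1 : (1 - (j:ℝ)/N)/(1 + ((j:ℝ)+1)/N) = (N - j)/(N + j + 1) := by
    rw [div_eq_div_iff (by positivity) (by positivity)]
    field_simp
    ring
  have e2 : ((j:ℝ)+1)/N + (j:ℝ)/N + ((((j:ℝ)+1)/N)^3 + ((j:ℝ)/N)^3)/(3*(1-u))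
      = (2*(j:ℝ)+1)/N + (((j:ℝ)+1)^3 + (j:ℝ)^3)/(N^3 * (3*(1-u))) := by
    have h1u : (1:ℝ) - u ≠ 0 := by linarith
    field_simp
    ring
  rw [e2, e1] at key
  exact key

lemma u_facts (N : ℝ) (hN : 3 ≤ N) :
    0 < N ^ (-(1:ℝ)/3) ∧ N * (N ^ (-(1:ℝ)/3))^3 = 1 ∧ N * N ^ (-(1:ℝ)/3) = N ^ ((2:ℝ)/3)
      ∧ N ^ (-(1:ℝ)/3) ≤ 0.694 := by
  have hN0 : (0:ℝ) < N := by linarith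
  refine ⟨rpow_pos_of_pos hN0 _, ?_, ?_, ?_⟩
  · rw [← Real.rpow_natCast (N ^ (-(1:ℝ)/3)) 3, ← Real.rpow_mul hN0.le]
    norm_num
    rw [Real.rpow_neg_one]
    field_simp
  · rw [show (2:ℝ)/3 = 1 + -(1:ℝ)/3 by norm_num, Real.rpow_add hN0, Real.rpow_one]
  · have h1 : N ^ (-(1:ℝ)/3) ≤ (3:ℝ) ^ (-(1:ℝ)/3) :=
      Real.rpow_le_rpow_of_nonpos (by norm_num) hN (by norm_num)
    have h2 : ((3:ℝ) ^ (-(1:ℝ)/3))^3 = 1/3 := by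
      rw [← Real.rpow_natCast ((3:ℝ) ^ (-(1:ℝ)/3)) 3, ← Real.rpow_mul (by norm_num)]
      norm_num
    have h3 : 0 < (3:ℝ) ^ (-(1:ℝ)/3) := rpow_pos_of_pos (by norm_num) _
    have h4 : (3:ℝ) ^ (-(1:ℝ)/3) ≤ 0.694 := by
      nlinarith [h2, h3, sq_nonneg ((3:ℝ) ^ (-(1:ℝ)/3) - 0.694)]
    linarith

set_option maxHeartbeats 2000000 in
lemma prod_lb (n K : ℕ) (hn : 3 ≤ n) (hK : (K:ℝ) ≤ (n:ℝ) ^ ((2:ℝ)/3)) :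
    Real.exp (-((K:ℝ)^2/(n:ℝ)) - (n:ℝ)^(-(1:ℝ)/3))
      ≤ ∏ j ∈ range K, (((n:ℝ) - j)/((n:ℝ) + j + 1)) := by
  have hN : (3:ℝ) ≤ (n:ℝ) := by exact_mod_cast hn
  have hN0 : (0:ℝ) < (n:ℝ) := by linarith
  obtain ⟨hu_pos, hu3, hNu, hu_le⟩ := u_facts (n:ℝ) hN
  have hu1 : (n:ℝ) ^ (-(1:ℝ)/3) < 1 := lt_of_le_of_lt hu_le (by norm_num)
  have h1u : (0:ℝ) < 1 - (n:ℝ) ^ (-(1:ℝ)/3) := by linarith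
  have hKu : (K:ℝ) ≤ (n:ℝ) * (n:ℝ) ^ (-(1:ℝ)/3) := by rw [hNu]; exact hK
  have hprod : Real.exp (∑ j ∈ range K,
        -((2*(j:ℝ)+1)/(n:ℝ) + (((j:ℝ)+1)^3 + (j:ℝ)^3)/((n:ℝ)^3 * (3*(1 - (n:ℝ) ^ (-(1:ℝ)/3))))))
      ≤ ∏ j ∈ range K, (((n:ℝ) - j)/((n:ℝ) + j + 1)) := by
    rw [Real.exp_sum]
    refine Finset.prod_le_prod (fun j _ => (Real.exp_pos _).le) ?_
    intro j hj
    rw [Finset.mem_range] at hj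
    have hjK : (j:ℝ) + 1 ≤ K := by exact_mod_cast hj
    exact term_lb j hN hu_pos hu1 (le_trans hjK hKu)
  refine le_trans ?_ hprod
  apply Real.exp_le_exp.mpr
  rw [Finset.sum_neg_distrib]
  have hsplit : ∑ j ∈ range K,
      ((2*(j:ℝ)+1)/(n:ℝ) + (((j:ℝ)+1)^3 + (j:ℝ)^3)/((n:ℝ)^3 * (3*(1 - (n:ℝ) ^ (-(1:ℝ)/3)))))
      = (K:ℝ)^2/(n:ℝ) + ((K:ℝ)^4 + (K:ℝ)^2)/2 / ((n:ℝ)^3 * (3*(1 - (n:ℝ) ^ (-(1:ℝ)/3)))) := by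
    rw [Finset.sum_add_distrib, ← Finset.sum_div, ← Finset.sum_div, sum_odd, sum_cube]
  rw [hsplit]
  have hK0 : (0:ℝ) ≤ K := Nat.cast_nonneg K
  have h4 : (K:ℝ)^4 ≤ ((n:ℝ) * (n:ℝ) ^ (-(1:ℝ)/3))^4 := pow_le_pow_left₀ hK0 hKu 4
  have h2 : (K:ℝ)^2 ≤ ((n:ℝ) * (n:ℝ) ^ (-(1:ℝ)/3))^2 := pow_le_pow_left₀ hK0 hKu 2
  set u := (n:ℝ) ^ (-(1:ℝ)/3) with hu
  set N := (n:ℝ)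
  have e4 : (N*u)^4 = N^3*u*(N*u^3) := by ring
  have e2 : (N*u)^2*(N*u^3)^2 = N^3*u*u^4*(N*u^3) := by ring
  rw [hu3] at e4 e2
  have hK4 : (K:ℝ)^4 + (K:ℝ)^2 ≤ N^3*u*(1+u^4) := by
    have a1 : (N*u)^4 = N^3*u := by rw [e4]; ring
    have a2 : (N*u)^2 = N^3*u*u^4 := by
      have := e2
      nlinarith [this]
    nlinarith [h4, h2, a1, a2]
  have h6 : 1 + u^4 ≤ 6*(1-u) := by
    nlinarith [pow_le_pow_left₀ hu_pos.le hu_le 4]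
  have hmain : ((K:ℝ)^4 + (K:ℝ)^2)/2 / (N^3*(3*(1-u))) ≤ u := by
    rw [div_div, div_le_iff₀ (by positivity)]
    have hh := mul_le_mul_of_nonneg_left h6 (show (0:ℝ) ≤ N^3*u by positivity)
    nlinarith [hK4, hh]
  linarith

/-- `a n k = C(2n, n+k) · 2^(-2n)`. -/
noncomputable def a (n : ℕ) (k : ℤ) : ℝ :=
  ((2 * n).choose ((n : ℤ) + k).toNat : ℝ) * (2 : ℝ) ^ (-(2 * (n : ℤ)))

lemma two_zpow_eq (n : ℕ) : (2 : ℝ) ^ (-(2 * (n : ℤ))) = ((4:ℝ) ^ n)⁻¹ := by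
  rw [show (-(2 * (n:ℤ))) = -((2*n : ℕ) : ℤ) by push_cast; ring, zpow_neg, zpow_natCast,
    pow_mul]
  norm_num

lemma a_zero_eq (n : ℕ) : a n 0 = (n.centralBinom : ℝ) / 4 ^ n := by
  unfold a Nat.centralBinom
  rw [add_zero, Int.toNat_natCast, two_zpow_eq, div_eq_mul_inv]

lemma a_zero_pos (n : ℕ) : 0 < a n 0 := by
  rw [a_zero_eq]
  have := Nat.centralBinom_pos n
  positivity

lemma a_zero_sq (n : ℕ) : (a n 0)^2 * (Real.Wallis.W n * (2*n+1)) = 1 := by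
  have hfac : Nat.factorial (2*n) = n.centralBinom * (Nat.factorial n * Nat.factorial n) := by
    have h := Nat.choose_mul_factorial_mul_factorial (show n ≤ 2*n by omega)
    rw [show 2*n - n = n by omega] at h
    rw [← h]; unfold Nat.centralBinom; ring
  rw [a_zero_eq, Real.Wallis.W_eq_factorial_ratio]
  have h1 : ((Nat.factorial (2*n)) : ℝ)
      = (n.centralBinom : ℝ) * ((Nat.factorial n : ℝ) * (Nat.factorial n : ℝ)) := by
    exact_mod_cast congrArg (Nat.cast : ℕ → ℝ) hfac
  rw [h1]
  have h2 : ((Nat.factorial n) : ℝ) ≠ 0 := Nat.cast_ne_zero.2 n.factorial_ne_zero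
  have h3 : (n.centralBinom : ℝ) ≠ 0 := Nat.cast_ne_zero.2 n.centralBinom_ne_zero
  have h4 : (2:ℝ)^(4*n) = (4:ℝ)^n * 4^n := by
    rw [show 4*n = 2*n + 2*n by ring, pow_add, pow_mul]
    norm_num
  have h5 : ((2:ℝ)*n + 1) ≠ 0 := by positivity
  rw [h4]
  field_simp

noncomputable def dseq (n : ℕ) : ℝ := (a n 0)^2 * n * (Real.pi * Real.exp (2/(7*n)))

lemma a_zero_succ (n : ℕ) : a (n+1) 0 * (2*(n:ℝ)+2) = a n 0 * (2*(n:ℝ)+1) := by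
  rw [a_zero_eq, a_zero_eq]
  have h := Nat.succ_mul_centralBinom_succ n
  have h' : ((n:ℝ)+1) * ((n+1).centralBinom : ℝ) = 2 * (2*(n:ℝ)+1) * (n.centralBinom : ℝ) := by
    exact_mod_cast congrArg (Nat.cast : ℕ → ℝ) h
  have h4 : (4:ℝ)^(n+1) = 4 * 4^n := by ring
  rw [h4]
  have : ((4:ℝ)^n) ≠ 0 := by positivity
  field_simp
  linear_combination 2 * h'

lemma dseq_strict_anti (n : ℕ) (hn : 1 ≤ n) : dseq (n+1) < dseq n := by
  have hN : (1:ℝ) ≤ n := by exact_mod_cast hn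
  set N := (n:ℝ)
  have hA : 0 < a n 0 := a_zero_pos n
  have hA' : 0 < a (n+1) 0 := a_zero_pos (n+1)
  have hsucc := a_zero_succ n
  have hval : a (n+1) 0 = a n 0 * ((2*N+1)/(2*N+2)) := by
    have : (2*N+2) ≠ 0 := by positivity
    field_simp
    linarith [hsucc]
  unfold dseq
  rw [hval]
  push_cast
  have hexp : Real.exp (2/(7*(N+1))) * Real.exp (2/(7*N*(N+1))) = Real.exp (2/(7*N)) := by
    rw [← Real.exp_add]
    congr 1
    field_simp
  have hgt : 1 + 2/(7*N*(N+1)) ≤ Real.exp (2/(7*N*(N+1))) := by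
    have := Real.add_one_le_exp (2/(7*N*(N+1)))
    linarith
  have hkey : ((2*N+1)/(2*N+2))^2 * (N+1) < N * (1 + 2/(7*N*(N+1))) := by
    have h1 : (0:ℝ) < 2*N+2 := by linarith
    have h2 : (0:ℝ) < 7*N*(N+1) := by nlinarith
    rw [div_pow, div_mul_eq_mul_div, div_lt_iff₀ (by positivity)]
    have e : N * (1 + 2/(7*N*(N+1))) = (7*N*(N+1)+2)/(7*(N+1)) := by field_simp
    rw [e, div_mul_eq_mul_div, lt_div_iff₀ (by positivity)]
    nlinarith [sq_nonneg N]
  have hpos : (0:ℝ) < (a n 0)^2 * π * Real.exp (2/(7*(N+1))) := by positivity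
  calc (a n 0 * ((2*N+1)/(2*N+2)))^2 * (N+1) * (π * Real.exp (2/(7*(N+1))))
      = ((a n 0)^2 * π * Real.exp (2/(7*(N+1)))) * (((2*N+1)/(2*N+2))^2 * (N+1)) := by ring
    _ < ((a n 0)^2 * π * Real.exp (2/(7*(N+1)))) * (N * (1 + 2/(7*N*(N+1)))) :=
        mul_lt_mul_of_pos_left hkey hpos
    _ ≤ ((a n 0)^2 * π * Real.exp (2/(7*(N+1)))) * (N * Real.exp (2/(7*N*(N+1)))) := by
        have hN0 : (0:ℝ) ≤ N := by linarith
        have := mul_le_mul_of_nonneg_left hgt hN0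
        exact mul_le_mul_of_nonneg_left this (le_of_lt hpos)
    _ = (a n 0)^2 * N * (π * (Real.exp (2/(7*(N+1))) * Real.exp (2/(7*N*(N+1))))) := by ring
    _ = (a n 0)^2 * N * (π * Real.exp (2/(7*N))) := by rw [hexp]

lemma dseq_tendsto : Tendsto dseq atTop (𝓝 1) := by
  have heq : dseq = fun n : ℕ => π * ((n:ℝ)/(2*n+1)) * Real.exp (2/(7*n)) / (Real.Wallis.W n) := by
    funext n
    have h := a_zero_sq n
    have hW := Real.Wallis.W_pos n
    have h21 : (2*(n:ℝ)+1) ≠ 0 := by positivity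
    have hA2 : (a n 0)^2 = 1/(Real.Wallis.W n * (2*(n:ℝ)+1)) := by
      rw [eq_div_iff (by positivity)]; exact h
    unfold dseq
    rw [hA2]
    field_simp
  rw [heq]
  have t1 : Tendsto (fun n : ℕ => (n:ℝ)/(2*n+1)) atTop (𝓝 (1/2)) := by
    have h2 : Tendsto (fun n : ℕ => 2 + 1/(n:ℝ)) atTop (𝓝 2) := by
      have h := (tendsto_one_div_atTop_nhds_zero_nat).const_add (2:ℝ)
      simpa using h
    have h3 : Tendsto (fun n : ℕ => 1/(2 + 1/(n:ℝ))) atTop (𝓝 (1/2)) := by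
      exact (tendsto_const_nhds.div h2 (by norm_num))
    apply h3.congr'
    filter_upwards [eventually_ge_atTop 1] with n hn
    have hn' : (0:ℝ) < n := by exact_mod_cast hn
    field_simp
  have t2 : Tendsto (fun n : ℕ => Real.exp (2/(7*(n:ℝ)))) atTop (𝓝 1) := by
    have h0 : Tendsto (fun n : ℕ => (2:ℝ)/(7*n)) atTop (𝓝 0) := by
      have := tendsto_const_div_atTop_nhds_zero_nat (2/7 : ℝ)
      apply this.congr
      intro n
      rw [div_div]
    have := (Real.continuous_exp.tendsto 0).comp h0
    simpa [Function.comp_def] using this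
  have t3 : Tendsto Real.Wallis.W atTop (𝓝 (π/2)) := Real.Wallis.tendsto_W_nhds_pi_div_two
  have := ((tendsto_const_nhds (x := π)).mul t1 |>.mul t2).div t3 (by positivity)
  convert this using 2
  · rfl
  have hπ : π ≠ 0 := Real.pi_ne_zero
  field_simp

lemma one_lt_dseq (n : ℕ) (hn : 1 ≤ n) : 1 < dseq n := by
  have mono : ∀ m, n+1 ≤ m → dseq m ≤ dseq (n+1) := by
    intro m hm
    induction m, hm using Nat.le_induction with
    | base => exact le_refl _
    | succ m hm ih => exact le_trans (dseq_strict_anti m (by omega)).le ih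
  have h1 : 1 ≤ dseq (n+1) :=
    le_of_tendsto dseq_tendsto (eventually_atTop.2 ⟨n+1, mono⟩)
  exact lt_of_le_of_lt h1 (dseq_strict_anti n hn)

lemma central_lb (n : ℕ) (hn : 1 ≤ n) :
    Real.exp (-(1/(7*(n:ℝ)))) / Real.sqrt (π * n) < a n 0 := by
  have hd := one_lt_dseq n hn
  have hN : (1:ℝ) ≤ n := by exact_mod_cast hn
  set N := (n:ℝ) with hNdef
  have hN0 : (0:ℝ) < N := by linarith
  have hA : 0 < a n 0 := a_zero_pos n
  have hπ : 0 < π := Real.pi_pos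
  have hsq : Real.exp (-(2/(7*N)))/(π*N) < (a n 0)^2 := by
    rw [div_lt_iff₀ (by positivity)]
    have e1 : Real.exp (2/(7*N)) * Real.exp (-(2/(7*N))) = 1 := by
      rw [← Real.exp_add]; norm_num
    have hd' : 1 * Real.exp (-(2/(7*N))) < (a n 0)^2 * N * (π * Real.exp (2/(7*N))) * Real.exp (-(2/(7*N))) :=
      mul_lt_mul_of_pos_right hd (Real.exp_pos _)
    calc Real.exp (-(2/(7*N))) = 1 * Real.exp (-(2/(7*N))) := by ring
      _ < (a n 0)^2 * N * (π * Real.exp (2/(7*N))) * Real.exp (-(2/(7*N))) := hd'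
      _ = (a n 0)^2 * (π * N) * (Real.exp (2/(7*N)) * Real.exp (-(2/(7*N)))) := by ring
      _ = (a n 0)^2 * (π * N) := by rw [e1]; ring
  have hs := Real.sqrt_lt_sqrt (by positivity) hsq
  rw [Real.sqrt_sq hA.le] at hs
  calc Real.exp (-(1/(7*N))) / Real.sqrt (π*N)
      = Real.sqrt (Real.exp (-(2/(7*N)))) / Real.sqrt (π*N) := by
        rw [← Real.exp_half]
        congr 1
        ring
    _ = Real.sqrt (Real.exp (-(2/(7*N)))/(π*N)) := by
        rw [Real.sqrt_div' _ (by positivity)]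
    _ < a n 0 := hs

lemma a_nat (n K : ℕ) : a n (K:ℤ) = ((2*n).choose (n+K) : ℝ) * (2 : ℝ) ^ (-(2 * (n : ℤ))) := by
  unfold a
  have h : ((n:ℤ)+(K:ℤ)).toNat = n + K := by omega
  rw [h]

lemma a_neg (n : ℕ) (K : ℕ) (hK : K ≤ n) : a n (-(K:ℤ)) = a n (K:ℤ) := by
  unfold a
  congr 2
  have h1 : ((n:ℤ) + -(K:ℤ)).toNat = n - K := by omega
  have h2 : ((n:ℤ) + (K:ℤ)).toNat = n + K := by omega
  rw [h1, h2]
  rw [show n - K = 2*n - (n+K) by omega]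
  exact Nat.choose_symm (by omega)

lemma a_succ (n K : ℕ) (h : K < n) :
    a n ((K:ℤ)+1) = a n (K:ℤ) * (((n:ℝ) - K)/((n:ℝ) + K + 1)) := by
  have hc := Nat.choose_succ_right_eq (2*n) (n+K)
  have hsub : 2*n - (n+K) = n - K := by omega
  rw [hsub] at hc
  have hcast : ((2*n).choose (n+K+1) : ℝ) * ((n:ℝ)+K+1) = ((2*n).choose (n+K) : ℝ) * ((n:ℝ)-K) := by
    have := congrArg (Nat.cast : ℕ → ℝ) hc
    push_cast [Nat.cast_sub h.le] at this
    convert this using 2 <;> ring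
  have hpos : ((n:ℝ)+K+1) ≠ 0 := by positivity
  have h1 : ((K:ℤ)+1) = ((K+1 : ℕ) : ℤ) := by push_cast; ring
  rw [h1, a_nat, a_nat]
  have h2 : n + (K+1) = n + K + 1 := by omega
  rw [h2]
  have hcc : ((2*n).choose (n+K+1) : ℝ) = ((2*n).choose (n+K) : ℝ) * (((n:ℝ)-K)/((n:ℝ)+K+1)) := by
    rw [mul_div_assoc', eq_div_iff hpos]
    linarith [hcast]
  rw [hcc]
  ring

lemma a_prod (n K : ℕ) (hK : K ≤ n) :
    a n (K:ℤ) = a n 0 * ∏ j ∈ range K, (((n:ℝ) - j)/((n:ℝ) + j + 1)) := by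
  induction K with
  | zero => simp
  | succ K ih =>
    have hK' : K ≤ n := by omega
    have h1 : ((K+1 : ℕ) : ℤ) = (K:ℤ) + 1 := by push_cast; ring
    rw [h1, a_succ n K (by omega), ih hK', prod_range_succ]
    ring


set_option maxHeartbeats 2000000 in
theorem stmt_16 (n : ℕ) (hn : 3 ≤ n) (k : ℤ) (hk : (|k| : ℝ) ≤ (n : ℝ) ^ ((2 : ℝ) / 3)) :
    a n k > (Real.sqrt (Real.pi * n))⁻¹ * Real.exp (-((k : ℝ) ^ 2 / n)) *
      Real.exp (-(1 / (7 * (n : ℝ)))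
        - (n : ℝ) ^ (-(7 : ℝ) / 3) / (3 * (1 - (n : ℝ) ^ (-(2 : ℝ) / 3)) ^ 2)
        - (n : ℝ) ^ (-(1 : ℝ) / 3)) ∧
    a n k > (Real.sqrt (Real.pi * n))⁻¹ * Real.exp (-((k : ℝ) ^ 2 / n)) *
      Real.exp (-(1.21 * (n : ℝ) ^ (-(1 : ℝ) / 3))) := by
  have hN : (3:ℝ) ≤ (n:ℝ) := by exact_mod_cast hn
  have hN0 : (0:ℝ) < (n:ℝ) := by linarith
  obtain ⟨hu_pos, hu3, hNu, hu_le⟩ := u_facts (n:ℝ) hN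
  set K := k.natAbs with hKdef
  have hKabs : ((K:ℕ):ℝ) = |(k:ℝ)| := by rw [hKdef, Nat.cast_natAbs, Int.cast_abs]
  have habs : (|k| : ℝ) = |(k:ℝ)| := by push_cast; ring
  have hKle : ((K:ℕ):ℝ) ≤ (n:ℝ) ^ ((2:ℝ)/3) := by rw [hKabs, ← habs]; exact hk
  have hKn : K ≤ n := by
    have h1 : ((K:ℕ):ℝ) ≤ (n:ℝ) * (n:ℝ) ^ (-(1:ℝ)/3) := by rw [hNu]; exact hKle
    have h2 : (n:ℝ) * (n:ℝ) ^ (-(1:ℝ)/3) ≤ (n:ℝ) := by nlinarith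
    exact_mod_cast le_trans h1 h2
  have hk2 : ((k:ℝ))^2 = ((K:ℕ):ℝ)^2 := by rw [hKabs, sq_abs]
  have haK : a n k = a n (K:ℤ) := by
    rcases Int.natAbs_eq k with h | h
    · rw [h]
    · rw [h, a_neg n K hKn]
  -- main lower bound
  have h1 : Real.exp (-(((K:ℕ):ℝ)^2/(n:ℝ)) - (n:ℝ)^(-(1:ℝ)/3))
      ≤ ∏ j ∈ range K, (((n:ℝ) - j)/((n:ℝ) + j + 1)) := prod_lb n K hn hKle
  have h2 : Real.exp (-(1/(7*(n:ℝ)))) / Real.sqrt (π * n) < a n 0 := central_lb n (by omega)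
  have hE : (0:ℝ) < Real.exp (-(((K:ℕ):ℝ)^2/(n:ℝ)) - (n:ℝ)^(-(1:ℝ)/3)) := Real.exp_pos _
  have key : (Real.exp (-(1/(7*(n:ℝ)))) / Real.sqrt (π * n))
      * Real.exp (-(((K:ℕ):ℝ)^2/(n:ℝ)) - (n:ℝ)^(-(1:ℝ)/3)) < a n k := by
    rw [haK, a_prod n K hKn]
    calc (Real.exp (-(1/(7*(n:ℝ)))) / Real.sqrt (π * n))
        * Real.exp (-(((K:ℕ):ℝ)^2/(n:ℝ)) - (n:ℝ)^(-(1:ℝ)/3))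
        < a n 0 * Real.exp (-(((K:ℕ):ℝ)^2/(n:ℝ)) - (n:ℝ)^(-(1:ℝ)/3)) :=
          mul_lt_mul_of_pos_right h2 hE
      _ ≤ a n 0 * ∏ j ∈ range K, (((n:ℝ) - j)/((n:ℝ) + j + 1)) :=
          mul_le_mul_of_nonneg_left h1 (a_zero_pos n).le
  have hsqrt_pos : (0:ℝ) < Real.sqrt (π * n) := Real.sqrt_pos.2 (by positivity)
  have hB : (0:ℝ) ≤ (n:ℝ) ^ (-(7:ℝ)/3) / (3 * (1 - (n:ℝ) ^ (-(2:ℝ)/3)) ^ 2) := by positivity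
  have first : a n k > (Real.sqrt (π * n))⁻¹ * Real.exp (-((k : ℝ) ^ 2 / n)) *
      Real.exp (-(1 / (7 * (n:ℝ)))
        - (n:ℝ) ^ (-(7:ℝ)/3) / (3 * (1 - (n:ℝ) ^ (-(2:ℝ)/3)) ^ 2)
        - (n:ℝ) ^ (-(1:ℝ)/3)) := by
    refine lt_of_le_of_lt ?_ key
    have eL : (Real.sqrt (π * n))⁻¹ * Real.exp (-((k : ℝ) ^ 2 / n)) *
        Real.exp (-(1 / (7 * (n:ℝ)))
          - (n:ℝ) ^ (-(7:ℝ)/3) / (3 * (1 - (n:ℝ) ^ (-(2:ℝ)/3)) ^ 2)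
          - (n:ℝ) ^ (-(1:ℝ)/3))
        = (Real.sqrt (π * n))⁻¹ * Real.exp ((-((k : ℝ) ^ 2 / n)) + (-(1 / (7 * (n:ℝ)))
          - (n:ℝ) ^ (-(7:ℝ)/3) / (3 * (1 - (n:ℝ) ^ (-(2:ℝ)/3)) ^ 2)
          - (n:ℝ) ^ (-(1:ℝ)/3))) := by
      rw [Real.exp_add]; ring
    have eR : (Real.exp (-(1/(7*(n:ℝ)))) / Real.sqrt (π * n))
        * Real.exp (-(((K:ℕ):ℝ)^2/(n:ℝ)) - (n:ℝ)^(-(1:ℝ)/3))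
        = (Real.sqrt (π * n))⁻¹ * Real.exp ((-(1/(7*(n:ℝ))))
          + (-(((K:ℕ):ℝ)^2/(n:ℝ)) - (n:ℝ)^(-(1:ℝ)/3))) := by
      rw [Real.exp_add]; ring
    rw [eL, eR]
    have hk2n : ((k:ℝ))^2/(n:ℝ) = ((K:ℕ):ℝ)^2/(n:ℝ) := by rw [hk2]
    have hexp : (-((k : ℝ) ^ 2 / n)) + (-(1 / (7 * (n:ℝ)))
          - (n:ℝ) ^ (-(7:ℝ)/3) / (3 * (1 - (n:ℝ) ^ (-(2:ℝ)/3)) ^ 2)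
          - (n:ℝ) ^ (-(1:ℝ)/3))
        ≤ (-(1/(7*(n:ℝ)))) + (-(((K:ℕ):ℝ)^2/(n:ℝ)) - (n:ℝ)^(-(1:ℝ)/3)) := by
      linarith [hB, hk2n]
    exact mul_le_mul_of_nonneg_left (Real.exp_le_exp.mpr hexp)
      (inv_nonneg.2 (Real.sqrt_nonneg _))
  refine ⟨first, ?_⟩
  -- second inequality
  have hv : (n:ℝ) ^ (-(2:ℝ)/3) = ((n:ℝ) ^ (-(1:ℝ)/3))^2 := by
    rw [← Real.rpow_natCast ((n:ℝ) ^ (-(1:ℝ)/3)) 2, ← Real.rpow_mul hN0.le]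
    norm_num
  have hw : (n:ℝ) ^ (-(7:ℝ)/3) = ((n:ℝ) ^ (-(1:ℝ)/3))^7 := by
    rw [← Real.rpow_natCast ((n:ℝ) ^ (-(1:ℝ)/3)) 7, ← Real.rpow_mul hN0.le]
    norm_num
  set u := (n:ℝ) ^ (-(1:ℝ)/3) with hudef
  have hinv : 1/(7*(n:ℝ)) = u^3/7 := by
    have h7 : u^3 = 1/(n:ℝ) := by rw [eq_div_iff hN0.ne']; linarith [hu3]
    rw [h7]
    field_simp
  have hexp_le : 1/(7*(n:ℝ)) + (n:ℝ) ^ (-(7:ℝ)/3) / (3 * (1 - (n:ℝ) ^ (-(2:ℝ)/3)) ^ 2)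
      ≤ 0.21 * u := by
    rw [hinv, hw, hv]
    have hu2 : u^2 ≤ 0.481636 := by nlinarith
    have hden : (0.806:ℝ) ≤ 3*(1-u^2)^2 := by nlinarith
    have hnum : u^7 ≤ 0.11174*u := by nlinarith [pow_le_pow_left₀ hu_pos.le hu_le 2]
    have hcube : u^3 ≤ 0.481636*u := by nlinarith
    have hfrac : u^7/(3*(1-u^2)^2) ≤ 0.1387*u := by
      rw [div_le_iff₀ (by nlinarith)]
      nlinarith [hnum, mul_le_mul_of_nonneg_left hden (show (0:ℝ) ≤ 0.1387*u by positivity)]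
    linarith
  refine lt_of_le_of_lt ?_ first
  have hee : Real.exp (-(1.21 * u)) ≤ Real.exp (-(1 / (7 * (n:ℝ)))
      - (n:ℝ) ^ (-(7:ℝ)/3) / (3 * (1 - (n:ℝ) ^ (-(2:ℝ)/3)) ^ 2)
      - u) := Real.exp_le_exp.mpr (by linarith [hexp_le, hu_pos])
  exact mul_le_mul_of_nonneg_left hee (by positivity)
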